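/- Assume the stepsizes are uniform, τ_v = τ for all v ∈ V, with τ ≤ ‖A_v‖₂⁻² for every v ∈ V. Then the DISTA operator Γ is nonexpansive with respect to the Frobenius norm: for all X, Z ∈ ℝ^{n×|V|}, ‖ΓX − ΓZ‖_F ≤ ‖X − Z‖_F. -/

import Mathlib

open Finset Filter Matrix

/-- Euclidean norm on `ℝ^k`. -/
noncomputable def enorm2 {k : ℕ} (x : Fin k → ℝ) : ℝ := Real.sqrt (∑ i, (x i) ^ 2)

/-- ℓ¹ norm on `ℝ^k`. -/
noncomputable def onenorm {k : ℕ} (x : Fin k → ℝ) : ℝ := ∑ i, |x i|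

/-- Operator norm of a matrix induced by Euclidean norms. -/
noncomputable def opNorm {m n : ℕ} (A : Matrix (Fin m) (Fin n) ℝ) : ℝ :=
  sSup {c : ℝ | ∃ z : Fin n → ℝ, z ≠ 0 ∧ c = enorm2 (A.mulVec z) / enorm2 z}

/-- Soft thresholding operator `η_α`, acting componentwise. -/
noncomputable def eta {k : ℕ} (α : ℝ) (x : Fin k → ℝ) : Fin k → ℝ :=
  fun i => if α < |x i| then Real.sign (x i) * (|x i| - α) else 0

/-- The uniform-weights stochastic matrix adapted to the graph `E`
(`d` is the common degree). -/
noncomputable def Pmat {V : Type*} (E : V → V → Prop) [DecidableRel E] (d : ℕ) :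
    V → V → ℝ := fun u w => if E u w then 1 / (d : ℝ) else 0

/-- Column `v` of `X Pᵀ`, i.e. the `P`-weighted average `∑ w P_{v,w} x_w`. -/
noncomputable def avg {n : ℕ} {V : Type*} [Fintype V] (P : V → V → ℝ)
    (X : V → Fin n → ℝ) : V → Fin n → ℝ := fun v i => ∑ w, P v w * X w i

/-- Frobenius norm of `X ∈ ℝ^{n×|V|}` (columns indexed by `V`). -/
noncomputable def frobNorm {n : ℕ} {V : Type*} [Fintype V] (X : V → Fin n → ℝ) : ℝ :=
  Real.sqrt (∑ v, ∑ i, (X v i) ^ 2)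

/-- The distributed Lasso functional `F`. -/
noncomputable def Flasso {n m : ℕ} {V : Type*} [Fintype V] (P : V → V → ℝ)
    (A : V → Matrix (Fin m) (Fin n) ℝ) (y : V → Fin m → ℝ)
    (q α : ℝ) (τ : V → ℝ) (X : V → Fin n → ℝ) : ℝ :=
  ∑ v, (q * enorm2 (y v - (A v).mulVec (X v)) ^ 2 + (2 * α / τ v) * onenorm (X v)
    + ((1 - q) / τ v) * ∑ w, P v w * enorm2 (avg P X w - X v) ^ 2)

/-- The DISTA operator `Γ`, defined columnwise. -/
noncomputable def Gamma {n m : ℕ} {V : Type*} [Fintype V] (P : V → V → ℝ)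
    (A : V → Matrix (Fin m) (Fin n) ℝ) (y : V → Fin m → ℝ)
    (q α : ℝ) (τ : V → ℝ) (X : V → Fin n → ℝ) : V → Fin n → ℝ :=
  fun v => eta α (fun i =>
    (1 - q) * avg P (avg P X) v i
      + q * (X v i + τ v * ((A v)ᵀ.mulVec (y v - (A v).mulVec (X v)) i)))

/-- The surrogate functional `F^S`. -/
noncomputable def FS {n m : ℕ} {V : Type*} [Fintype V] (E : V → V → Prop) [DecidableRel E]
    (d : ℕ) (A : V → Matrix (Fin m) (Fin n) ℝ) (y : V → Fin m → ℝ)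
    (q α : ℝ) (τ : V → ℝ) (X C B : V → Fin n → ℝ) : ℝ :=
  ∑ v, (q * enorm2 ((A v).mulVec (X v) - y v) ^ 2 + (2 * α / τ v) * onenorm (X v)
    + ((1 - q) / ((d : ℝ) * τ v)) *
        ∑ w ∈ Finset.univ.filter (fun w => E v w), enorm2 (X v - C w) ^ 2
    + (q / τ v) * enorm2 (X v - B v) ^ 2
    - q * enorm2 ((A v).mulVec (X v - B v)) ^ 2)

/-! ### Auxiliary lemmas -/

lemma enorm2_nonneg {k : ℕ} (x : Fin k → ℝ) : 0 ≤ enorm2 x := Real.sqrt_nonneg _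

lemma sq_enorm2 {k : ℕ} (x : Fin k → ℝ) : enorm2 x ^ 2 = ∑ i, x i ^ 2 :=
  Real.sq_sqrt (Finset.sum_nonneg fun _ _ => sq_nonneg _)

lemma sum_mul_le_enorm2 {k : ℕ} (x y : Fin k → ℝ) :
    ∑ i, x i * y i ≤ enorm2 x * enorm2 y := by
  have h := Finset.sum_mul_sq_le_sq_mul_sq Finset.univ x y
  calc ∑ i, x i * y i ≤ |∑ i, x i * y i| := le_abs_self _
    _ = Real.sqrt ((∑ i, x i * y i) ^ 2) := (Real.sqrt_sq_eq_abs _).symm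
    _ ≤ Real.sqrt ((∑ i, x i ^ 2) * ∑ i, y i ^ 2) := Real.sqrt_le_sqrt h
    _ = enorm2 x * enorm2 y := by
        rw [Real.sqrt_mul (Finset.sum_nonneg fun _ _ => sq_nonneg _)]; rfl

lemma opNorm_facts {m n : ℕ} (A : Matrix (Fin m) (Fin n) ℝ)
    (hne : ∃ z : Fin n → ℝ, z ≠ 0) :
    0 ≤ opNorm A ∧ ∀ z, enorm2 (A.mulVec z) ≤ opNorm A * enorm2 z := by
  set S := {c : ℝ | ∃ z : Fin n → ℝ, z ≠ 0 ∧ c = enorm2 (A.mulVec z) / enorm2 z} with hS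
  set F := Real.sqrt (∑ i, ∑ j, A i j ^ 2) with hF
  have hbd : ∀ z : Fin n → ℝ, enorm2 (A.mulVec z) ≤ F * enorm2 z := by
    intro z
    have h2 : ∑ i, (A.mulVec z i) ^ 2 ≤ (∑ i, ∑ j, A i j ^ 2) * ∑ j, z j ^ 2 := by
      rw [Finset.sum_mul]
      refine Finset.sum_le_sum fun i _ => ?_
      exact Finset.sum_mul_sq_le_sq_mul_sq Finset.univ (fun j => A i j) z
    calc enorm2 (A.mulVec z) = Real.sqrt (∑ i, (A.mulVec z i) ^ 2) := rfl
      _ ≤ Real.sqrt ((∑ i, ∑ j, A i j ^ 2) * ∑ j, z j ^ 2) := Real.sqrt_le_sqrt h2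
      _ = F * enorm2 z := by
          refine (Real.sqrt_mul (Finset.sum_nonneg fun _ _ => Finset.sum_nonneg fun _ _ => sq_nonneg _) _).trans ?_
          rfl
  have hpos : ∀ z : Fin n → ℝ, z ≠ 0 → 0 < enorm2 z := by
    intro z hz
    obtain ⟨i, hi⟩ := Function.ne_iff.mp hz
    have : 0 < ∑ j, z j ^ 2 :=
      Finset.sum_pos' (fun j _ => sq_nonneg _)
        ⟨i, Finset.mem_univ i, by rw [← sq_abs]; exact pow_pos (abs_pos.mpr hi) 2⟩
    exact Real.sqrt_pos.mpr this
  have hbdd : BddAbove S := by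
    refine ⟨F, ?_⟩
    rintro c ⟨z, hz, rfl⟩
    rw [div_le_iff₀ (hpos z hz)]
    exact hbd z
  obtain ⟨z0, hz0⟩ := hne
  have hmem : enorm2 (A.mulVec z0) / enorm2 z0 ∈ S := ⟨z0, hz0, rfl⟩
  have h0 : 0 ≤ opNorm A :=
    le_trans (div_nonneg (enorm2_nonneg _) (enorm2_nonneg _)) (le_csSup hbdd hmem)
  refine ⟨h0, fun z => ?_⟩
  by_cases hz : z = 0
  · subst hz
    have h1 : enorm2 (A.mulVec (0 : Fin n → ℝ)) = 0 := by
      rw [Matrix.mulVec_zero]; simp [enorm2]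
    have h2 : enorm2 (0 : Fin n → ℝ) = 0 := by simp [enorm2]
    rw [h1, h2, mul_zero]
  · have hle : enorm2 (A.mulVec z) / enorm2 z ≤ opNorm A := le_csSup hbdd ⟨z, hz, rfl⟩
    rw [div_le_iff₀ (hpos z hz)] at hle
    exact hle

/-- Scalar soft thresholding. -/
noncomputable def soft (α t : ℝ) : ℝ := if α < |t| then Real.sign t * (|t| - α) else 0

lemma soft_eq (α : ℝ) (hα : 0 < α) (t : ℝ) :
    soft α t = t - max (-α) (min α t) := by
  unfold soft
  rcases lt_trichotomy t 0 with ht | ht | ht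
  · rw [abs_of_neg ht, Real.sign_of_neg ht]
    by_cases h : α < -t
    · rw [if_pos h, min_eq_right (by linarith), max_eq_left (by linarith)]; ring
    · rw [if_neg h, min_eq_right (by linarith), max_eq_right (by linarith)]; ring
  · subst ht
    simp [hα.le, not_lt.mpr hα.le, max_eq_right (by linarith : -α ≤ (0:ℝ)), min_eq_right hα.le]
  · rw [abs_of_pos ht, Real.sign_of_pos ht]
    by_cases h : α < t
    · rw [if_pos h, min_eq_left h.le, max_eq_right (by linarith)]; ring
    · rw [if_neg h, min_eq_right (not_lt.mp h), max_eq_right (by linarith)]; ring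

lemma soft_lip (α : ℝ) (hα : 0 < α) (a b : ℝ) : |soft α a - soft α b| ≤ |a - b| := by
  have key : ∀ s t : ℝ, s ≤ t → 0 ≤ soft α t - soft α s ∧ soft α t - soft α s ≤ t - s := by
    intro s t hst
    rw [soft_eq α hα, soft_eq α hα]
    have hmono : max (-α) (min α s) ≤ max (-α) (min α t) :=
      max_le_max le_rfl (min_le_min le_rfl hst)
    have hlip : max (-α) (min α t) - max (-α) (min α s) ≤ t - s := by
      have h1 : |max (min α t) (-α) - max (min α s) (-α)| ≤ |min α t - min α s| :=
        abs_max_sub_max_le_abs _ _ _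
      have h2 : |min α t - min α s| ≤ |t - s| := by
        calc |min α t - min α s| ≤ max |α - α| |t - s| := abs_min_sub_min_le_max α t α s
          _ = |t - s| := by rw [sub_self, abs_zero, max_eq_right (abs_nonneg _)]
      rw [max_comm (-α) (min α t), max_comm (-α) (min α s)]
      calc max (min α t) (-α) - max (min α s) (-α)
          ≤ |max (min α t) (-α) - max (min α s) (-α)| := le_abs_self _
        _ ≤ |t - s| := le_trans h1 h2
        _ = t - s := abs_of_nonneg (by linarith)
    constructor <;> linarith
  rcases le_total a b with h | h
  · obtain ⟨h1, h2⟩ := key a b h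
    rw [abs_sub_comm, abs_of_nonneg h1, abs_sub_comm a b, abs_of_nonneg (by linarith)]
    exact h2
  · obtain ⟨h1, h2⟩ := key b a h
    rw [abs_of_nonneg h1, abs_of_nonneg (by linarith)]
    exact h2

lemma avg_sq_le {n : ℕ} {V : Type*} [Fintype V] (P : V → V → ℝ)
    (hP : ∀ v w, 0 ≤ P v w) (hrow : ∀ v, ∑ w, P v w = 1) (hcol : ∀ w, ∑ v, P v w = 1)
    (X : V → Fin n → ℝ) :
    ∑ v, ∑ i, (avg P X v i) ^ 2 ≤ ∑ v, ∑ i, (X v i) ^ 2 := by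
  have point : ∀ v i, (avg P X v i) ^ 2 ≤ ∑ w, P v w * (X w i) ^ 2 := by
    intro v i
    have cs := Finset.sum_mul_sq_le_sq_mul_sq Finset.univ
      (fun w => Real.sqrt (P v w)) (fun w => Real.sqrt (P v w) * X w i)
    have e1 : ∀ w : V, Real.sqrt (P v w) * (Real.sqrt (P v w) * X w i) = P v w * X w i := by
      intro w; rw [← mul_assoc, Real.mul_self_sqrt (hP v w)]
    have e2 : ∀ w : V, Real.sqrt (P v w) ^ 2 = P v w := fun w => Real.sq_sqrt (hP v w)
    have e3 : ∀ w : V, (Real.sqrt (P v w) * X w i) ^ 2 = P v w * (X w i) ^ 2 := by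
      intro w; rw [mul_pow, e2]
    simp only [e1, e3, e2] at cs
    rw [hrow v, one_mul] at cs
    exact cs
  calc ∑ v, ∑ i, (avg P X v i) ^ 2
      ≤ ∑ v, ∑ i, ∑ w, P v w * (X w i) ^ 2 :=
        Finset.sum_le_sum fun v _ => Finset.sum_le_sum fun i _ => point v i
    _ = ∑ v, ∑ w, P v w * ∑ i, (X w i) ^ 2 := by
        refine Finset.sum_congr rfl fun v _ => ?_
        rw [Finset.sum_comm]
        exact Finset.sum_congr rfl fun w _ => (Finset.mul_sum _ _ _).symm
    _ = ∑ w, (∑ v, P v w) * ∑ i, (X w i) ^ 2 := by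
        rw [Finset.sum_comm]
        exact Finset.sum_congr rfl fun w _ => (Finset.sum_mul _ _ _).symm
    _ = ∑ w, ∑ i, (X w i) ^ 2 :=
        Finset.sum_congr rfl fun w _ => by rw [hcol w, one_mul]

lemma avg_sub {n : ℕ} {V : Type*} [Fintype V] (P : V → V → ℝ) (X Z : V → Fin n → ℝ) :
    avg P (X - Z) = avg P X - avg P Z := by
  funext v i
  simp [avg, Pi.sub_apply, mul_sub, Finset.sum_sub_distrib]

/-- Embedding a matrix into Euclidean space on the product index. -/
noncomputable def toE {n : ℕ} {V : Type*} [Fintype V] (X : V → Fin n → ℝ) :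
    EuclideanSpace ℝ (V × Fin n) := WithLp.toLp 2 (fun p : V × Fin n => X p.1 p.2)

lemma frob_eq_norm {n : ℕ} {V : Type*} [Fintype V] (X : V → Fin n → ℝ) :
    frobNorm X = ‖toE X‖ := by
  rw [EuclideanSpace.norm_eq]
  unfold frobNorm
  congr 1
  rw [Fintype.sum_prod_type]
  exact Finset.sum_congr rfl fun v _ => Finset.sum_congr rfl fun i _ => by
    rw [Real.norm_eq_abs, sq_abs]; rfl

lemma frobNorm_mono {n : ℕ} {V : Type*} [Fintype V] (X Y : V → Fin n → ℝ)
    (h : ∀ v i, |X v i| ≤ |Y v i|) : frobNorm X ≤ frobNorm Y := by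
  unfold frobNorm
  apply Real.sqrt_le_sqrt
  refine Finset.sum_le_sum fun v _ => Finset.sum_le_sum fun i _ => ?_
  rw [← sq_abs (X v i), ← sq_abs (Y v i)]
  exact pow_le_pow_left₀ (abs_nonneg _) (h v i) 2

lemma grad_step {m n : ℕ} (A : Matrix (Fin m) (Fin n) ℝ) (τ c : ℝ)
    (hτ0 : 0 ≤ τ) (hc : 0 ≤ c) (hτc : τ * c ^ 2 ≤ 1)
    (hb : ∀ z, enorm2 (A.mulVec z) ≤ c * enorm2 z)
    (w : Fin n → ℝ) :
    ∑ i, (w i - τ * Aᵀ.mulVec (A.mulVec w) i) ^ 2 ≤ ∑ i, (w i) ^ 2 := by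
  set u := A.mulVec w with hu
  set s := Aᵀ.mulVec u with hs
  have haux : ∀ x : Fin n → ℝ, ∑ i, x i * s i = ∑ j, u j * A.mulVec x j := by
    intro x
    simp only [hs, Matrix.mulVec, dotProduct, Matrix.transpose_apply, Finset.mul_sum]
    rw [Finset.sum_comm]
    exact Finset.sum_congr rfl fun j _ => Finset.sum_congr rfl fun i _ => by ring
  have h1 : ∑ i, w i * s i = ∑ j, u j ^ 2 := by
    rw [haux w, ← hu]
    exact Finset.sum_congr rfl fun j _ => (sq (u j)).symm
  have h2 : enorm2 s ≤ c * enorm2 u := by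
    by_cases h0 : enorm2 s = 0
    · rw [h0]; exact mul_nonneg hc (enorm2_nonneg u)
    · have hspos : 0 < enorm2 s := lt_of_le_of_ne (enorm2_nonneg s) (Ne.symm h0)
      have hss : enorm2 s * enorm2 s ≤ (c * enorm2 u) * enorm2 s := by
        calc enorm2 s * enorm2 s = enorm2 s ^ 2 := (sq _).symm
          _ = ∑ i, s i ^ 2 := sq_enorm2 s
          _ = ∑ i, s i * s i := Finset.sum_congr rfl fun i _ => sq (s i)
          _ = ∑ j, u j * A.mulVec s j := haux s
          _ ≤ enorm2 u * enorm2 (A.mulVec s) := sum_mul_le_enorm2 u (A.mulVec s)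
          _ ≤ enorm2 u * (c * enorm2 s) :=
              mul_le_mul_of_nonneg_left (hb s) (enorm2_nonneg u)
          _ = (c * enorm2 u) * enorm2 s := by ring
      exact le_of_mul_le_mul_right hss hspos
  have hsum_s : ∑ i, s i ^ 2 ≤ c ^ 2 * ∑ j, u j ^ 2 := by
    have h3 : enorm2 s ^ 2 ≤ (c * enorm2 u) ^ 2 :=
      pow_le_pow_left₀ (enorm2_nonneg s) h2 2
    rw [sq_enorm2, mul_pow, sq_enorm2] at h3
    exact h3
  have hUnn : (0:ℝ) ≤ ∑ j, u j ^ 2 := Finset.sum_nonneg fun _ _ => sq_nonneg _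
  have expand : ∀ i, (w i - τ * s i) ^ 2
      = w i ^ 2 - 2 * τ * (w i * s i) + τ ^ 2 * s i ^ 2 := fun i => by ring
  calc ∑ i, (w i - τ * s i) ^ 2
      = ∑ i, w i ^ 2 - 2 * τ * ∑ i, w i * s i + τ ^ 2 * ∑ i, s i ^ 2 := by
        simp only [expand, Finset.sum_add_distrib, Finset.sum_sub_distrib, ← Finset.mul_sum]
    _ = ∑ i, w i ^ 2 - 2 * τ * ∑ j, u j ^ 2 + τ ^ 2 * ∑ i, s i ^ 2 := by rw [h1]
    _ ≤ ∑ i, w i ^ 2 := by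
        have hkey : (τ * c ^ 2) * (τ * ∑ j, u j ^ 2) ≤ 1 * (τ * ∑ j, u j ^ 2) :=
          mul_le_mul_of_nonneg_right hτc (mul_nonneg hτ0 hUnn)
        have h4 := mul_le_mul_of_nonneg_left hsum_s (sq_nonneg τ)
        nlinarith [mul_nonneg hτ0 hUnn]

/-- Lemma 8: nonexpansivity. With uniform stepsizes `τ ≤ ‖A_v‖₂⁻²` for every
`v`, the DISTA operator `Γ` is nonexpansive in the Frobenius norm:
`‖ΓX − ΓZ‖_F ≤ ‖X − Z‖_F`. -/
theorem dista_nonexpansive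
    {n m d : ℕ} {V : Type*} [Fintype V] [DecidableEq V] [Nonempty V]
    (E : V → V → Prop) [DecidableRel E]
    (hself : ∀ v, E v v) (hsymm : ∀ u v, E u v → E v u)
    (hreg : ∀ v, (Finset.univ.filter (fun w => E v w)).card = d)
    (A : V → Matrix (Fin m) (Fin n) ℝ) (y : V → Fin m → ℝ)
    (q α : ℝ) (hq0 : 0 < q) (hq1 : q < 1) (hα : 0 < α)
    (τ : ℝ) (hτpos : 0 < τ)
    (hτ : ∀ v, τ ≤ (opNorm (A v) ^ 2)⁻¹) :
    ∀ X Z : V → Fin n → ℝ,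
      frobNorm (Gamma (Pmat E d) A y q α (fun _ => τ) X
          - Gamma (Pmat E d) A y q α (fun _ => τ) Z)
        ≤ frobNorm (X - Z) := by
  intro X Z
  classical
  obtain ⟨v0⟩ := (inferInstance : Nonempty V)
  have hd : 0 < d := by
    rw [← hreg v0]
    exact Finset.card_pos.mpr ⟨v0, by simp [hself v0]⟩
  have hdne : (d : ℝ) ≠ 0 := Nat.cast_ne_zero.mpr hd.ne'
  set P : V → V → ℝ := Pmat E d with hPdef
  have hPnn : ∀ v w, 0 ≤ P v w := by
    intro v w
    rw [hPdef]
    unfold Pmat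
    split
    · positivity
    · exact le_refl 0
  have hrow : ∀ v, ∑ w, P v w = 1 := by
    intro v
    rw [hPdef]
    unfold Pmat
    rw [← Finset.sum_filter, Finset.sum_const, hreg v, nsmul_eq_mul]
    field_simp
  have hcol : ∀ w, ∑ v, P v w = 1 := by
    intro w
    have hfil : (Finset.univ.filter fun v => E v w) = Finset.univ.filter fun v => E w v := by
      apply Finset.filter_congr
      intro v _
      exact ⟨fun h => hsymm v w h, fun h => hsymm w v h⟩
    rw [hPdef]
    unfold Pmat
    rw [← Finset.sum_filter, Finset.sum_const, hfil, hreg w, nsmul_eq_mul]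
    field_simp
  have hne : ∃ z : Fin n → ℝ, z ≠ 0 := by
    by_contra h
    push_neg at h
    have hS : {c : ℝ | ∃ z : Fin n → ℝ, z ≠ 0 ∧ c = enorm2 ((A v0).mulVec z) / enorm2 z}
        = ∅ := by
      ext c
      simp only [Set.mem_setOf_eq, Set.mem_empty_iff_false, iff_false, not_exists]
      intro z hz
      exact hz.1 (h z)
    have h0 : opNorm (A v0) = 0 := by
      unfold opNorm
      rw [hS, Real.sSup_empty]
    have h1 := hτ v0
    rw [h0] at h1
    norm_num at h1
    linarith
  have hop := fun v => opNorm_facts (A v) hne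
  have hτc : ∀ v, τ * opNorm (A v) ^ 2 ≤ 1 := by
    intro v
    have h1 : τ * opNorm (A v) ^ 2 ≤ (opNorm (A v) ^ 2)⁻¹ * opNorm (A v) ^ 2 :=
      mul_le_mul_of_nonneg_right (hτ v) (sq_nonneg _)
    rcases eq_or_ne (opNorm (A v)) 0 with h | h
    · rw [h]; norm_num
    · rwa [inv_mul_cancel₀ (pow_ne_zero 2 h)] at h1
  set D : V → Fin n → ℝ := X - Z with hDdef
  set U : V → Fin n → ℝ := avg P (avg P D) with hUdef
  set G : V → Fin n → ℝ := fun v i => D v i - τ * (A v)ᵀ.mulVec ((A v).mulVec (D v)) i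
    with hGdef
  set T : V → Fin n → ℝ := fun v i => (1 - q) * U v i + q * G v i with hTdef
  have hpt : ∀ v i,
      |(Gamma P A y q α (fun _ => τ) X - Gamma P A y q α (fun _ => τ) Z) v i| ≤ |T v i| := by
    intro v i
    have heq : (Gamma P A y q α (fun _ => τ) X - Gamma P A y q α (fun _ => τ) Z) v i
        = soft α ((1 - q) * avg P (avg P X) v i
            + q * (X v i + τ * ((A v)ᵀ.mulVec (y v - (A v).mulVec (X v)) i)))
        - soft α ((1 - q) * avg P (avg P Z) v i
            + q * (Z v i + τ * ((A v)ᵀ.mulVec (y v - (A v).mulVec (Z v)) i))) := rfl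
    rw [heq]
    refine le_trans (soft_lip α hα _ _) (le_of_eq ?_)
    congr 1
    have e1 : avg P (avg P X) v i - avg P (avg P Z) v i = U v i := by
      rw [hUdef, hDdef, avg_sub, avg_sub]
      simp [Pi.sub_apply]
    have e2 : (A v)ᵀ.mulVec (y v - (A v).mulVec (X v)) i
        - (A v)ᵀ.mulVec (y v - (A v).mulVec (Z v)) i
        = - (A v)ᵀ.mulVec ((A v).mulVec (D v)) i := by
      rw [← Pi.sub_apply ((A v)ᵀ.mulVec (y v - (A v).mulVec (X v)))
        ((A v)ᵀ.mulVec (y v - (A v).mulVec (Z v))), ← Matrix.mulVec_sub]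
      have e3 : y v - (A v).mulVec (X v) - (y v - (A v).mulVec (Z v))
          = -((A v).mulVec (D v)) := by
        have hDv : D v = X v - Z v := rfl
        rw [hDv, Matrix.mulVec_sub]
        abel
      rw [e3, Matrix.mulVec_neg, Pi.neg_apply]
    have hDvi : D v i = X v i - Z v i := rfl
    have hTvi : T v i = (1 - q) * U v i
        + q * (D v i - τ * (A v)ᵀ.mulVec ((A v).mulVec (D v)) i) := by
      rw [hTdef, hGdef]
    rw [hTvi]
    linear_combination (1 - q) * e1 + q * τ * e2 - q * hDvi
  have hU : frobNorm U ≤ frobNorm D := by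
    rw [hUdef]
    unfold frobNorm
    apply Real.sqrt_le_sqrt
    exact le_trans (avg_sq_le P hPnn hrow hcol (avg P D)) (avg_sq_le P hPnn hrow hcol D)
  have hGle : frobNorm G ≤ frobNorm D := by
    rw [hGdef]
    unfold frobNorm
    apply Real.sqrt_le_sqrt
    refine Finset.sum_le_sum fun v _ => ?_
    exact grad_step (A v) τ (opNorm (A v)) hτpos.le (hop v).1 (hτc v) (hop v).2 (D v)
  have hq1' : (0:ℝ) ≤ 1 - q := by linarith
  calc frobNorm (Gamma P A y q α (fun _ => τ) X - Gamma P A y q α (fun _ => τ) Z)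
      ≤ frobNorm T := frobNorm_mono _ _ hpt
    _ = ‖toE T‖ := frob_eq_norm T
    _ = ‖(1 - q) • toE U + q • toE G‖ := by
        have hTe : toE T = (1 - q) • toE U + q • toE G := by
          ext p
          simp only [hTdef, toE, PiLp.add_apply, PiLp.smul_apply, smul_eq_mul, PiLp.toLp_apply]
        rw [hTe]
    _ ≤ ‖(1 - q) • toE U‖ + ‖q • toE G‖ := norm_add_le _ _
    _ = (1 - q) * ‖toE U‖ + q * ‖toE G‖ := by
        rw [norm_smul, norm_smul, Real.norm_eq_abs, Real.norm_eq_abs,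
          abs_of_nonneg hq1', abs_of_nonneg hq0.le]
    _ = (1 - q) * frobNorm U + q * frobNorm G := by rw [← frob_eq_norm, ← frob_eq_norm]
    _ ≤ (1 - q) * frobNorm D + q * frobNorm D :=
        add_le_add (mul_le_mul_of_nonneg_left hU hq1') (mul_le_mul_of_nonneg_left hGle hq0.le)
    _ = frobNorm D := by ring
    _ = frobNorm (X - Z) := by rw [hDdef]
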